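/- Let Q = conv((0,1,1),(1,0,1),(1,1,0),(0,−1,−1),(−1,0,−1),(−1,−1,0)) ⊂ ℝ^3 (a lattice octahedron). Then the only lattice points of Q are its six vertices and the origin, the point (1,1,1) lies in 2Q ∩ ℤ^3, and (1,1,1) is not the sum of two points of Q ∩ ℤ^3; in particular, Q is not IDP and has no unimodular cover. -/

import Mathlib

set_option maxHeartbeats 1000000

open scoped Pointwise

noncomputable section

/-- The real point corresponding to an integer point of `ℤ³`. -/
def toR3 (v : Fin 3 → ℤ) : Fin 3 → ℝ := fun i => (v i : ℝ)

/-- The set of lattice points of `ℝ³`. -/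
def Lat3 : Set (Fin 3 → ℝ) := Set.range toR3

/-- A unimodular tetrahedron: the convex hull of lattice points `v0, v1, v2, v3`
such that `v1 - v0, v2 - v0, v3 - v0` form a `ℤ`-basis of `ℤ³`. -/
def IsUnimodularTet (S : Set (Fin 3 → ℝ)) : Prop :=
  ∃ v : Fin 4 → Fin 3 → ℤ,
    S = convexHull ℝ {toR3 (v 0), toR3 (v 1), toR3 (v 2), toR3 (v 3)} ∧
    (Matrix.of ![v 1 - v 0, v 2 - v 0, v 3 - v 0]).det ∈ ({1, -1} : Set ℤ)

/-- A unimodular cover of `P`. -/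
def HasUnimodularCover (P : Set (Fin 3 → ℝ)) : Prop :=
  ∃ 𝒞 : Set (Set (Fin 3 → ℝ)),
    (∀ S ∈ 𝒞, IsUnimodularTet S ∧ S ⊆ P) ∧ ⋃₀ 𝒞 = P

/-- A polytope `R ⊆ ℝ³` is IDP if every lattice point of `nR` is a sum of `n`
lattice points of `R`, for every positive integer `n`. -/
def IsIDP3 (R : Set (Fin 3 → ℝ)) : Prop :=
  ∀ n : ℕ, 0 < n → ∀ z : Fin 3 → ℤ, toR3 z ∈ (n : ℝ) • R →
    ∃ f : Fin n → Fin 3 → ℤ, (∀ i, toR3 (f i) ∈ R) ∧ z = ∑ i, f i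

/-- The octahedron of Example 3 in the paper. -/
def octQ : Set (Fin 3 → ℝ) :=
  convexHull ℝ {![0,1,1], ![1,0,1], ![1,1,0], ![0,-1,-1], ![-1,0,-1], ![-1,-1,0]}

/-- The `H`-description of the octahedron (superset). -/
def octC : Set (Fin 3 → ℝ) :=
  {x | x 0 + x 1 + x 2 ≤ 2 ∧ -2 ≤ x 0 + x 1 + x 2 ∧
       3*x 0 - x 1 - x 2 ≤ 2 ∧ -2 ≤ 3*x 0 - x 1 - x 2 ∧
       -x 0 + 3*x 1 - x 2 ≤ 2 ∧ -2 ≤ -x 0 + 3*x 1 - x 2 ∧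
       -x 0 - x 1 + 3*x 2 ≤ 2 ∧ -2 ≤ -x 0 - x 1 + 3*x 2}

lemma octC_convex : Convex ℝ octC := by
  intro x hx y hy a b ha hb hab
  obtain ⟨h1,h2,h3,h4,h5,h6,h7,h8⟩ := hx
  obtain ⟨g1,g2,g3,g4,g5,g6,g7,g8⟩ := hy
  simp only [octC, Set.mem_setOf_eq, Pi.add_apply, Pi.smul_apply, smul_eq_mul]
  refine ⟨?_,?_,?_,?_,?_,?_,?_,?_⟩ <;> nlinarith

lemma octQ_subset : octQ ⊆ octC := by
  apply convexHull_min _ octC_convex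
  intro x hx
  simp only [Set.mem_insert_iff, Set.mem_singleton_iff] at hx
  rcases hx with rfl|rfl|rfl|rfl|rfl|rfl <;>
    simp [octC] <;> norm_num

lemma toR3_cast (a b c : ℤ) : toR3 ![a,b,c] = ![(a:ℝ),(b:ℝ),(c:ℝ)] := by
  funext i; fin_cases i <;> simp [toR3]

lemma lat_classify (z : Fin 3 → ℤ) (hz : toR3 z ∈ octC) :
    toR3 z ∈ ({![0,1,1], ![1,0,1], ![1,1,0], ![0,-1,-1], ![-1,0,-1], ![-1,-1,0], ![0,0,0]} :
        Set (Fin 3 → ℝ)) := by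
  obtain ⟨h1,h2,h3,h4,h5,h6,h7,h8⟩ := hz
  simp only [toR3] at h1 h2 h3 h4 h5 h6 h7 h8
  have i1 : z 0 + z 1 + z 2 ≤ 2 := by exact_mod_cast h1
  have i2 : -2 ≤ z 0 + z 1 + z 2 := by exact_mod_cast h2
  have i3 : 3*z 0 - z 1 - z 2 ≤ 2 := by exact_mod_cast h3
  have i4 : -2 ≤ 3*z 0 - z 1 - z 2 := by exact_mod_cast h4
  have i5 : -z 0 + 3*z 1 - z 2 ≤ 2 := by exact_mod_cast h5
  have i6 : -2 ≤ -z 0 + 3*z 1 - z 2 := by exact_mod_cast h6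
  have i7 : -z 0 - z 1 + 3*z 2 ≤ 2 := by exact_mod_cast h7
  have i8 : -2 ≤ -z 0 - z 1 + 3*z 2 := by exact_mod_cast h8
  have key : (z 0 = 0 ∧ z 1 = 1 ∧ z 2 = 1) ∨ (z 0 = 1 ∧ z 1 = 0 ∧ z 2 = 1) ∨
      (z 0 = 1 ∧ z 1 = 1 ∧ z 2 = 0) ∨ (z 0 = 0 ∧ z 1 = -1 ∧ z 2 = -1) ∨
      (z 0 = -1 ∧ z 1 = 0 ∧ z 2 = -1) ∨ (z 0 = -1 ∧ z 1 = -1 ∧ z 2 = 0) ∨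
      (z 0 = 0 ∧ z 1 = 0 ∧ z 2 = 0) := by omega
  have hz3 : z = ![z 0, z 1, z 2] := by
    funext i; fin_cases i <;> simp
  simp only [Set.mem_insert_iff, Set.mem_singleton_iff]
  rcases key with ⟨a,b,c⟩|⟨a,b,c⟩|⟨a,b,c⟩|⟨a,b,c⟩|⟨a,b,c⟩|⟨a,b,c⟩|⟨a,b,c⟩ <;>
    rw [hz3, a, b, c, toR3_cast] <;> norm_num

lemma lat_parity (z : Fin 3 → ℤ) (hz : toR3 z ∈ octC) : 2 ∣ z 0 + z 1 + z 2 := by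
  obtain ⟨h1,h2,h3,h4,h5,h6,h7,h8⟩ := hz
  simp only [toR3] at h1 h2 h3 h4 h5 h6 h7 h8
  have i1 : z 0 + z 1 + z 2 ≤ 2 := by exact_mod_cast h1
  have i2 : -2 ≤ z 0 + z 1 + z 2 := by exact_mod_cast h2
  have i3 : 3*z 0 - z 1 - z 2 ≤ 2 := by exact_mod_cast h3
  have i4 : -2 ≤ 3*z 0 - z 1 - z 2 := by exact_mod_cast h4
  have i5 : -z 0 + 3*z 1 - z 2 ≤ 2 := by exact_mod_cast h5
  have i6 : -2 ≤ -z 0 + 3*z 1 - z 2 := by exact_mod_cast h6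
  have i7 : -z 0 - z 1 + 3*z 2 ≤ 2 := by exact_mod_cast h7
  have i8 : -2 ≤ -z 0 - z 1 + 3*z 2 := by exact_mod_cast h8
  have key : (z 0 = 0 ∧ z 1 = 1 ∧ z 2 = 1) ∨ (z 0 = 1 ∧ z 1 = 0 ∧ z 2 = 1) ∨
      (z 0 = 1 ∧ z 1 = 1 ∧ z 2 = 0) ∨ (z 0 = 0 ∧ z 1 = -1 ∧ z 2 = -1) ∨
      (z 0 = -1 ∧ z 1 = 0 ∧ z 2 = -1) ∨ (z 0 = -1 ∧ z 1 = -1 ∧ z 2 = 0) ∨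
      (z 0 = 0 ∧ z 1 = 0 ∧ z 2 = 0) := by omega
  omega

lemma det_not_unit (v : Fin 4 → Fin 3 → ℤ)
    (h : ∀ i, 2 ∣ (v i 0 + v i 1 + v i 2)) :
    (Matrix.of ![v 1 - v 0, v 2 - v 0, v 3 - v 0]).det ∉ ({1, -1} : Set ℤ) := by
  intro hmem
  set M : Matrix (Fin 3) (Fin 3) ℤ := Matrix.of ![v 1 - v 0, v 2 - v 0, v 3 - v 0] with hM
  have hcast : ((Int.castRingHom (ZMod 2)).mapMatrix M).det = 0 := by
    rw [← Matrix.exists_mulVec_eq_zero_iff]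
    refine ⟨![1,1,1], by decide, ?_⟩
    funext i
    have key : ∀ j : Fin 4, ((v j 0 : ZMod 2) + v j 1 + v j 2) = 0 := by
      intro j
      have hj := h j
      have : ((v j 0 + v j 1 + v j 2 : ℤ) : ZMod 2) = 0 := by
        rw [ZMod.intCast_zmod_eq_zero_iff_dvd]; exact_mod_cast hj
      push_cast at this; linear_combination this
    fin_cases i <;>
      simp [Matrix.mulVec, dotProduct, hM, Fin.sum_univ_three] <;>
      · have k0 := key 0
        first
        | (have k1 := key 1; linear_combination k1 - k0)
        | (have k1 := key 2; linear_combination k1 - k0)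
        | (have k1 := key 3; linear_combination k1 - k0)
  have hd := RingHom.map_det (Int.castRingHom (ZMod 2)) M
  rw [hcast] at hd
  rcases hmem with h1 | h1 <;> rw [h1] at hd <;> simp at hd

/-- The octahedron `Q` of the paper: its only lattice points are its six
vertices and the origin; `(1,1,1)` lies in `2Q ∩ ℤ³` but is not a sum of two
lattice points of `Q`.  In particular `Q` is not IDP and has no unimodular
cover. -/
theorem octahedron_not_IDP :
    octQ ∩ Lat3 =
      ({![0,1,1], ![1,0,1], ![1,1,0], ![0,-1,-1], ![-1,0,-1], ![-1,-1,0], ![0,0,0]} :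
        Set (Fin 3 → ℝ)) ∧
    (![1,1,1] : Fin 3 → ℝ) ∈ (2:ℝ) • octQ ∧
    (¬ ∃ x y : Fin 3 → ℝ, x ∈ octQ ∩ Lat3 ∧ y ∈ octQ ∩ Lat3 ∧
        x + y = ![1,1,1]) ∧
    ¬ IsIDP3 octQ ∧ ¬ HasUnimodularCover octQ := by
  -- membership of the six vertices
  have hva : (![0,1,1] : Fin 3 → ℝ) ∈ octQ := subset_convexHull ℝ _ (by simp)
  have hvb : (![1,0,1] : Fin 3 → ℝ) ∈ octQ := subset_convexHull ℝ _ (by simp)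
  have hvc : (![1,1,0] : Fin 3 → ℝ) ∈ octQ := subset_convexHull ℝ _ (by simp)
  have hva' : (![0,-1,-1] : Fin 3 → ℝ) ∈ octQ := subset_convexHull ℝ _ (by simp)
  have hvb' : (![-1,0,-1] : Fin 3 → ℝ) ∈ octQ := subset_convexHull ℝ _ (by simp)
  have hvc' : (![-1,-1,0] : Fin 3 → ℝ) ∈ octQ := subset_convexHull ℝ _ (by simp)
  have hconv : Convex ℝ octQ := convex_convexHull ℝ _
  -- the origin
  have h0 : (![0,0,0] : Fin 3 → ℝ) ∈ octQ := by
    have := hconv hva hva' (by norm_num : (0:ℝ) ≤ 1/2) (by norm_num : (0:ℝ) ≤ 1/2)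
      (by norm_num)
    convert this using 1
    funext i; fin_cases i <;> simp <;> norm_num
  -- Lat3 membership
  have hlat : ∀ a b c : ℤ, (![(a:ℝ),(b:ℝ),(c:ℝ)] : Fin 3 → ℝ) ∈ Lat3 :=
    fun a b c => ⟨![a,b,c], toR3_cast a b c⟩
  have hlat' : ∀ x : Fin 3 → ℝ,
      x ∈ ({![0,1,1], ![1,0,1], ![1,1,0], ![0,-1,-1], ![-1,0,-1], ![-1,-1,0], ![0,0,0]} :
        Set (Fin 3 → ℝ)) → x ∈ Lat3 := by
    intro x hx
    simp only [Set.mem_insert_iff, Set.mem_singleton_iff] at hx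
    rcases hx with rfl|rfl|rfl|rfl|rfl|rfl|rfl
    · have := hlat 0 1 1; norm_num at this ⊢; convert this using 2 <;> norm_num
    · have := hlat 1 0 1; norm_num at this ⊢; convert this using 2 <;> norm_num
    · have := hlat 1 1 0; norm_num at this ⊢; convert this using 2 <;> norm_num
    · have := hlat 0 (-1) (-1); norm_num at this ⊢; convert this using 2 <;> norm_num
    · have := hlat (-1) 0 (-1); norm_num at this ⊢; convert this using 2 <;> norm_num
    · have := hlat (-1) (-1) 0; norm_num at this ⊢; convert this using 2 <;> norm_num
    · have := hlat 0 0 0; norm_num at this ⊢; convert this using 2 <;> norm_num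
  -- Part 1
  have part1 : octQ ∩ Lat3 =
      ({![0,1,1], ![1,0,1], ![1,1,0], ![0,-1,-1], ![-1,0,-1], ![-1,-1,0], ![0,0,0]} :
        Set (Fin 3 → ℝ)) := by
    apply Set.Subset.antisymm
    · rintro p ⟨hp, z, rfl⟩
      exact lat_classify z (octQ_subset hp)
    · intro p hp
      refine ⟨?_, hlat' p hp⟩
      simp only [Set.mem_insert_iff, Set.mem_singleton_iff] at hp
      rcases hp with rfl|rfl|rfl|rfl|rfl|rfl|rfl
      exacts [hva, hvb, hvc, hva', hvb', hvc', h0]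
  -- Part 2
  have part2 : (![1,1,1] : Fin 3 → ℝ) ∈ (2:ℝ) • octQ := by
    have m1 : ((1/2:ℝ)) • (![0,1,1]:Fin 3 → ℝ) + (1/2:ℝ) • ![1,0,1] ∈ octQ :=
      hconv hva hvb (by norm_num) (by norm_num) (by norm_num)
    have m2 : ((2/3:ℝ)) • ((1/2:ℝ) • (![0,1,1]:Fin 3 → ℝ) + (1/2:ℝ) • ![1,0,1])
        + (1/3:ℝ) • ![1,1,0] ∈ octQ :=
      hconv m1 hvc (by norm_num) (by norm_num) (by norm_num)
    have z0 : ((1/2:ℝ)) • (![0,1,1]:Fin 3 → ℝ) + (1/2:ℝ) • ![0,-1,-1] ∈ octQ :=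
      hconv hva hva' (by norm_num) (by norm_num) (by norm_num)
    have q : ((3/4:ℝ)) • (((2/3:ℝ)) • ((1/2:ℝ) • (![0,1,1]:Fin 3 → ℝ) + (1/2:ℝ) • ![1,0,1])
        + (1/3:ℝ) • ![1,1,0]) + (1/4:ℝ) • ((1/2:ℝ) • (![0,1,1]:Fin 3 → ℝ)
        + (1/2:ℝ) • ![0,-1,-1]) ∈ octQ :=
      hconv m2 z0 (by norm_num) (by norm_num) (by norm_num)
    have := Set.smul_mem_smul_set (a := (2:ℝ)) q
    convert this using 1
    funext i; fin_cases i <;> simp <;> norm_num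
  have part3' : ¬ ∃ x y : Fin 3 → ℝ, x ∈ octQ ∩ Lat3 ∧ y ∈ octQ ∩ Lat3 ∧
      x + y = ![1,1,1] := by
    rintro ⟨x, y, hx, hy, hxy⟩
    rw [part1] at hx hy
    simp only [Set.mem_insert_iff, Set.mem_singleton_iff] at hx hy
    rcases hx with rfl|rfl|rfl|rfl|rfl|rfl|rfl <;>
      rcases hy with rfl|rfl|rfl|rfl|rfl|rfl|rfl <;>
      · have e0 := congrFun hxy 0
        have e1 := congrFun hxy 1
        have e2 := congrFun hxy 2
        revert e0 e1 e2; norm_num [Matrix.cons_val, Matrix.cons_val_two, Matrix.tail_cons, Matrix.head_cons]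
  refine ⟨part1, part2, part3', ?_, ?_⟩
  -- Part 4
  · intro hidp
    have hmem : toR3 ![1,1,1] ∈ ((2:ℕ) : ℝ) • octQ := by
      have : toR3 ![(1:ℤ),1,1] = (![1,1,1] : Fin 3 → ℝ) := by
        rw [toR3_cast]; norm_num
      rw [this]; norm_num; exact part2
    obtain ⟨f, hf, hsum⟩ := hidp 2 (by norm_num) ![1,1,1] hmem
    refine part3' ⟨toR3 (f 0), toR3 (f 1), ⟨hf 0, ⟨f 0, rfl⟩⟩, ⟨hf 1, ⟨f 1, rfl⟩⟩, ?_⟩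
    have hadd : toR3 (f 0) + toR3 (f 1) = toR3 (f 0 + f 1) := by
      funext i; simp [toR3]
    rw [hadd, ← show (![1,1,1] : Fin 3 → ℤ) = f 0 + f 1 from by
        rw [hsum, Fin.sum_univ_two], toR3_cast]
    norm_num
  -- Part 5
  · rintro ⟨C, hC, hcover⟩
    have hmem : (![0,1,1] : Fin 3 → ℝ) ∈ ⋃₀ C := by rw [hcover]; exact hva
    obtain ⟨S, hS, hxS⟩ := hmem
    obtain ⟨⟨v, hSeq, hdet⟩, hsub⟩ := hC S hS
    refine det_not_unit v ?_ hdet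
    intro i
    have hvi : toR3 (v i) ∈ octC := by
      apply octQ_subset
      apply hsub
      rw [hSeq]
      apply subset_convexHull ℝ _
      fin_cases i <;> simp
    exact lat_parity (v i) hvi
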